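/- Let a, b > 0 and c > 0. If v(τ,ξ) satisfies v_τ + (v_ξ + v_ξξ)² = 0, then the function u(t,x) defined implicitly by the change of variables τ = ct, ξ = log(cx/b) - ct, v = bu/(cx) + (a/(2c))·log(cx/b) - (a/2)(1 + a/(2c))·t, i.e. u(t,x) = (cx/b)·[v(ct, log(cx/b) - ct) - (a/(2c))·log(cx/b) + (a/2)(1 + a/(2c))·t], satisfies the nonlinear Black–Scholes equation u_t + a·x²·u_xx + b·x³·(u_xx)² + c·x·u_x - c·u = 0 for t > 0, x > 0. -/

import Mathlib

private lemma clm_eval (φ : ℝ × ℝ →L[ℝ] ℝ) (p q : ℝ) :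
    φ (p, q) = p * φ (1, 0) + q * φ (0, 1) := by
  have h : ((p, q) : ℝ × ℝ) = p • ((1:ℝ), (0:ℝ)) + q • ((0:ℝ), (1:ℝ)) := by
    simp [Prod.ext_iff]
  rw [h, map_add, map_smul, map_smul, smul_eq_mul, smul_eq_mul]

theorem stmt9 (a b c : ℝ) (ha : 0 < a) (hb : 0 < b) (hc : 0 < c)
    (v : ℝ → ℝ → ℝ)
    (hv : ContDiff ℝ 2 (Function.uncurry v))
    (hvpde : ∀ τ ξ : ℝ,
      deriv (fun s => v s ξ) τ + (deriv (v τ) ξ + deriv (deriv (v τ)) ξ) ^ 2 = 0)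
    (u : ℝ → ℝ → ℝ)
    (hu : ∀ t x : ℝ, u t x = (c * x / b) *
      (v (c * t) (Real.log (c * x / b) - c * t)
        - (a / (2 * c)) * Real.log (c * x / b) + (a / 2) * (1 + a / (2 * c)) * t)) :
    ∀ t x : ℝ, 0 < t → 0 < x →
      deriv (fun s => u s x) t
      + a * x ^ 2 * deriv (fun y => deriv (fun z => u t z) y) x
      + b * x ^ 3 * (deriv (fun y => deriv (fun z => u t z) y) x) ^ 2 + c * x * deriv (fun y => u t y) x - c * u t x = 0 := by
  intro t x ht hx
  have hb0 : b ≠ 0 := ne_of_gt hb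
  have hc0 : c ≠ 0 := ne_of_gt hc
  have hx0 : x ≠ 0 := ne_of_gt hx
  set f : ℝ × ℝ → ℝ := Function.uncurry v with hf_def
  have hf : ContDiff ℝ 2 f := hv
  have hfd : Differentiable ℝ f := hf.differentiable (by norm_num)
  have hf' : ContDiff ℝ 1 (fderiv ℝ f) := hf.fderiv_right (by norm_num)
  set V1 : ℝ × ℝ → ℝ := fun p => fderiv ℝ f p (1, 0) with hV1_def
  set V2 : ℝ × ℝ → ℝ := fun p => fderiv ℝ f p (0, 1) with hV2_def
  have hV2 : ContDiff ℝ 1 V2 := hf'.clm_apply contDiff_const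
  have hV2d : Differentiable ℝ V2 := hV2.differentiable (by norm_num)
  set V22 : ℝ × ℝ → ℝ := fun p => fderiv ℝ V2 p (0, 1) with hV22_def
  have hcompf : ∀ (γ : ℝ → ℝ × ℝ) (γ' : ℝ × ℝ) (s : ℝ), HasDerivAt γ γ' s →
      HasDerivAt (fun s => f (γ s)) (fderiv ℝ f (γ s) γ') s := fun γ γ' s hγ =>
    (hfd (γ s)).hasFDerivAt.comp_hasDerivAt s hγ
  have hcompV2 : ∀ (γ : ℝ → ℝ × ℝ) (γ' : ℝ × ℝ) (s : ℝ), HasDerivAt γ γ' s →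
      HasDerivAt (fun s => V2 (γ s)) (fderiv ℝ V2 (γ s) γ') s := fun γ γ' s hγ =>
    (hV2d (γ s)).hasFDerivAt.comp_hasDerivAt s hγ
  -- partial derivative identities
  have hd2 : ∀ τ ξ : ℝ, deriv (v τ) ξ = V2 (τ, ξ) := by
    intro τ ξ
    exact (hcompf (fun y => (τ, y)) (0, 1) ξ (HasDerivAt.prodMk (hasDerivAt_const ξ τ) (hasDerivAt_id ξ))).deriv
  have hd1 : ∀ τ ξ : ℝ, deriv (fun s => v s ξ) τ = V1 (τ, ξ) := by
    intro τ ξ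
    exact (hcompf (fun s => (s, ξ)) (1, 0) τ (HasDerivAt.prodMk (hasDerivAt_id τ) (hasDerivAt_const τ ξ))).deriv
  have hd22 : ∀ τ ξ : ℝ, deriv (deriv (v τ)) ξ = V22 (τ, ξ) := by
    intro τ ξ
    have he : deriv (v τ) = fun y => V2 (τ, y) := funext fun y => hd2 τ y
    rw [he]
    exact (hcompV2 (fun y => (τ, y)) (0, 1) ξ (HasDerivAt.prodMk (hasDerivAt_const ξ τ) (hasDerivAt_id ξ))).deriv
  have hpde : ∀ p : ℝ × ℝ, V1 p + (V2 p + V22 p) ^ 2 = 0 := by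
    rintro ⟨τ, ξ⟩
    have h := hvpde τ ξ
    rwa [hd1, hd2, hd22] at h
  -- time derivative
  have hmulc : HasDerivAt (fun s : ℝ => c * s) c t := by
    simpa using (hasDerivAt_id t).const_mul c
  have hγ : HasDerivAt (fun s => ((c * s : ℝ), Real.log (c * x / b) - c * s)) ((c : ℝ), -c) t :=
    HasDerivAt.prodMk hmulc (hmulc.const_sub (Real.log (c * x / b)))
  have hft : HasDerivAt (fun s => f (c * s, Real.log (c * x / b) - c * s))
      (fderiv ℝ f (c * t, Real.log (c * x / b) - c * t) (c, -c)) t :=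
    hcompf _ _ t hγ
  have hK : HasDerivAt (fun s : ℝ => (a / 2) * (1 + a / (2 * c)) * s)
      ((a / 2) * (1 + a / (2 * c))) t := by
    simpa using (hasDerivAt_id t).const_mul ((a / 2) * (1 + a / (2 * c)))
  have hut : HasDerivAt (fun s => u s x)
      ((c * x / b) * (fderiv ℝ f (c * t, Real.log (c * x / b) - c * t) (c, -c)
        + (a / 2) * (1 + a / (2 * c)))) t := by
    have h1 := ((hft.sub_const ((a / (2 * c)) * Real.log (c * x / b))).add hK).const_mul (c * x / b)
    have heq : (fun s => u s x) = fun s => (c * x / b) *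
        (f (c * s, Real.log (c * x / b) - c * s)
          - (a / (2 * c)) * Real.log (c * x / b) + (a / 2) * (1 + a / (2 * c)) * s) := by
      funext s; rw [hu s x]; rfl
    rw [heq]
    exact h1
  -- spatial derivative, at all y > 0
  have hux : ∀ y : ℝ, 0 < y → HasDerivAt (fun z => u t z)
      ((c / b) * ((f (c * t, Real.log (c * y / b) - c * t)
          - (a / (2 * c)) * Real.log (c * y / b) + (a / 2) * (1 + a / (2 * c)) * t)
        + V2 (c * t, Real.log (c * y / b) - c * t) - a / (2 * c))) y := by
    intro y hy
    have hy0 : y ≠ 0 := ne_of_gt hy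
    have hcyb : c * y / b ≠ 0 := by positivity
    have hlog : HasDerivAt (fun z => Real.log (c * z / b)) y⁻¹ y := by
      have h1 : HasDerivAt (fun z : ℝ => c * z / b) (c / b) y := by
        simpa using ((hasDerivAt_id y).const_mul c).div_const b
      have h2 := (Real.hasDerivAt_log hcyb).comp y h1
      refine HasDerivAt.congr_deriv h2 ?_
      field_simp
    have hq : HasDerivAt (fun z => ((c * t : ℝ), Real.log (c * z / b) - c * t)) ((0 : ℝ), y⁻¹) y :=
      HasDerivAt.prodMk (hasDerivAt_const y (c * t)) (hlog.sub_const (c * t))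
    have hfy : HasDerivAt (fun z => f (c * t, Real.log (c * z / b) - c * t))
        (y⁻¹ * V2 (c * t, Real.log (c * y / b) - c * t)) y := by
      have h := hcompf _ _ y hq
      have he : fderiv ℝ f (c * t, Real.log (c * y / b) - c * t) ((0 : ℝ), y⁻¹)
          = y⁻¹ * V2 (c * t, Real.log (c * y / b) - c * t) := by
        rw [clm_eval]; simp [hV2_def]
      rwa [he] at h
    have hG : HasDerivAt (fun z => f (c * t, Real.log (c * z / b) - c * t)
        - (a / (2 * c)) * Real.log (c * z / b) + (a / 2) * (1 + a / (2 * c)) * t)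
        (y⁻¹ * V2 (c * t, Real.log (c * y / b) - c * t) - (a / (2 * c)) * y⁻¹) y :=
      (hfy.sub (hlog.const_mul (a / (2 * c)))).add_const _
    have hlin : HasDerivAt (fun z : ℝ => c * z / b) (c / b) y := by
      simpa using ((hasDerivAt_id y).const_mul c).div_const b
    have hprod := hlin.mul hG
    have heq : (fun z => u t z) = fun z => (c * z / b) *
        (f (c * t, Real.log (c * z / b) - c * t)
          - (a / (2 * c)) * Real.log (c * z / b) + (a / 2) * (1 + a / (2 * c)) * t) := by
      funext z; rw [hu t z]; rfl
    rw [heq]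
    refine HasDerivAt.congr_deriv hprod ?_
    field_simp
    ring
  -- second spatial derivative
  have hev : (fun y => deriv (fun z => u t z) y) =ᶠ[nhds x] (fun y =>
      (c / b) * ((f (c * t, Real.log (c * y / b) - c * t)
          - (a / (2 * c)) * Real.log (c * y / b) + (a / 2) * (1 + a / (2 * c)) * t)
        + V2 (c * t, Real.log (c * y / b) - c * t) - a / (2 * c))) := by
    filter_upwards [Ioi_mem_nhds hx] with y hy using (hux y hy).deriv
  have hcxb : c * x / b ≠ 0 := by positivity
  have hlogx : HasDerivAt (fun z => Real.log (c * z / b)) x⁻¹ x := by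
    have h1 : HasDerivAt (fun z : ℝ => c * z / b) (c / b) x := by
      simpa using ((hasDerivAt_id x).const_mul c).div_const b
    have h2 := (Real.hasDerivAt_log hcxb).comp x h1
    refine HasDerivAt.congr_deriv h2 ?_
    field_simp
  have hqx : HasDerivAt (fun z => ((c * t : ℝ), Real.log (c * z / b) - c * t)) ((0 : ℝ), x⁻¹) x :=
    HasDerivAt.prodMk (hasDerivAt_const x (c * t)) (hlogx.sub_const (c * t))
  have hfx : HasDerivAt (fun z => f (c * t, Real.log (c * z / b) - c * t))
      (x⁻¹ * V2 (c * t, Real.log (c * x / b) - c * t)) x := by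
    have h := hcompf _ _ x hqx
    have he : fderiv ℝ f (c * t, Real.log (c * x / b) - c * t) ((0 : ℝ), x⁻¹)
        = x⁻¹ * V2 (c * t, Real.log (c * x / b) - c * t) := by
      rw [clm_eval]; simp [hV2_def]
    rwa [he] at h
  have hV2x : HasDerivAt (fun z => V2 (c * t, Real.log (c * z / b) - c * t))
      (x⁻¹ * V22 (c * t, Real.log (c * x / b) - c * t)) x := by
    have h := hcompV2 _ _ x hqx
    have he : fderiv ℝ V2 (c * t, Real.log (c * x / b) - c * t) ((0 : ℝ), x⁻¹)
        = x⁻¹ * V22 (c * t, Real.log (c * x / b) - c * t) := by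
      rw [clm_eval]; simp [hV22_def]
    rwa [he] at h
  have hD : HasDerivAt (fun y =>
      (c / b) * ((f (c * t, Real.log (c * y / b) - c * t)
          - (a / (2 * c)) * Real.log (c * y / b) + (a / 2) * (1 + a / (2 * c)) * t)
        + V2 (c * t, Real.log (c * y / b) - c * t) - a / (2 * c)))
      ((c / b) * ((x⁻¹ * V2 (c * t, Real.log (c * x / b) - c * t)
          - (a / (2 * c)) * x⁻¹) + x⁻¹ * V22 (c * t, Real.log (c * x / b) - c * t))) x := by
    exact ((((hfx.sub (hlogx.const_mul (a / (2 * c)))).add_const _).add hV2x).sub_const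
      _).const_mul (c / b)
  have h2nd : deriv (fun y => deriv (fun z => u t z) y) x
      = (c / b) * ((x⁻¹ * V2 (c * t, Real.log (c * x / b) - c * t)
          - (a / (2 * c)) * x⁻¹) + x⁻¹ * V22 (c * t, Real.log (c * x / b) - c * t)) := by
    rw [hev.deriv_eq]
    exact hD.deriv
  -- assemble
  have hfdc : fderiv ℝ f (c * t, Real.log (c * x / b) - c * t) ((c : ℝ), -c)
      = c * V1 (c * t, Real.log (c * x / b) - c * t)
        + (-c) * V2 (c * t, Real.log (c * x / b) - c * t) := by
    rw [clm_eval]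
  have huvx : v (c * t) (Real.log (c * x / b) - c * t)
      = f (c * t, Real.log (c * x / b) - c * t) := rfl
  rw [hut.deriv, h2nd, (hux x hx).deriv, hu t x, hfdc, huvx]
  have hp := hpde (c * t, Real.log (c * x / b) - c * t)
  set P1 := V1 (c * t, Real.log (c * x / b) - c * t)
  set P2 := V2 (c * t, Real.log (c * x / b) - c * t)
  set P22 := V22 (c * t, Real.log (c * x / b) - c * t)
  set F := f (c * t, Real.log (c * x / b) - c * t)
  have hP1 : P1 = -(P2 + P22) ^ 2 := by linarith
  rw [hP1]
  field_simp
  ring
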